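/- The well-definedness of observable operators is basis independent: if {g_ā}_{ā∈Λ} is any Hamel basis of 𝒢 consisting of future-distribution functions, and t_a is defined on this basis by t_a(g_c̄) = ℙ(a|c̄) g_{c̄a} and extended linearly, then for every b̄ ∈ O* with ℙ(b̄) ≠ 0 one has t_a(g_b̄) = ℙ(a|b̄) g_{b̄a}; hence any two such bases yield the same operator. -/

import Mathlib

theorem stmt13 {O : Type*} (P : List O → ℝ)
    (hP0 : ∀ b, 0 ≤ P b)
    (hmono : ∀ b w, P (b ++ w) ≤ P b)
    (g : List O → List O → ℝ)
    (hgdef : ∀ b w, g b w = if P b = 0 then 0 else P (b ++ w) / P b)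
    (a : O) (Λ : Set (List O))
    (hspan : Submodule.span ℝ (g '' Λ) = Submodule.span ℝ (Set.range g))
    (hindep : LinearIndependent ℝ (fun b : Λ => g b.1))
    (t : (List O → ℝ) →ₗ[ℝ] (List O → ℝ))
    (ht : ∀ b ∈ Λ, t (g b) = g b [a] • g (b ++ [a])) :
    ∀ b : List O, P b ≠ 0 → t (g b) = g b [a] • g (b ++ [a]) := by
  -- key pointwise identity
  have key : ∀ b : List O, g b [a] • g (b ++ [a]) = fun w => g b ([a] ++ w) := by
    intro b
    funext w
    simp only [Pi.smul_apply, smul_eq_mul]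
    rw [hgdef b [a], hgdef (b ++ [a]) w, hgdef b ([a] ++ w)]
    by_cases hb : P b = 0
    · simp [hb]
    · simp only [hb, if_false]
      by_cases hba : P (b ++ [a]) = 0
      · have h1 : P (b ++ ([a] ++ w)) = 0 := by
          have := hmono (b ++ [a]) w
          rw [List.append_assoc] at this
          exact le_antisymm (by simpa [hba] using this) (hP0 _)
        simp only [List.singleton_append] at h1
        simp [hba, h1]
      · simp only [hba, if_false]
        rw [← List.append_assoc]
        field_simp
  -- the shift linear map
  let T : (List O → ℝ) →ₗ[ℝ] (List O → ℝ) :=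
    { toFun := fun f => fun w => f ([a] ++ w)
      map_add' := fun f h => rfl
      map_smul' := fun c f => rfl }
  have hagree : ∀ x ∈ Submodule.span ℝ (g '' Λ), t x = T x := by
    intro x hx
    induction hx using Submodule.span_induction with
    | mem y hy =>
        obtain ⟨b, hb, rfl⟩ := hy
        rw [ht b hb, key b]
        rfl
    | zero => simp
    | add y z _ _ hy hz => rw [map_add, map_add, hy, hz]
    | smul c y _ hy => rw [map_smul, map_smul, hy]
  intro b _
  have hb : g b ∈ Submodule.span ℝ (g '' Λ) := by
    rw [hspan]
    exact Submodule.subset_span ⟨b, rfl⟩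
  rw [hagree _ hb, key b]
  rfl
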